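/- For every Δ ≥ 1, ε > 0 and r ≥ 0, there exists N such that for every finite graph G with maximum degree at most Δ there is a finite graph G' with maximum degree at most Δ and |V(G')| ≤ N satisfying |u_r(F,G) − u_r(F,G')| < ε for all rooted graphs F of radius ≤ r. -/

import Mathlib

structure RootedGraph where
  n : ℕ
  graph : SimpleGraph (Fin n)
  root : Fin n

def RootedGraph.Iso (F F' : RootedGraph) : Prop :=
  ∃ e : F.graph ≃g F'.graph, e F.root = F'.root

def RootedGraph.MaxDegLE (F : RootedGraph) (Δ : ℕ) : Prop :=
  ∀ v, (F.graph.neighborSet v).ncard ≤ Δ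

def RootedGraph.RadiusLE (F : RootedGraph) (r : ℕ) : Prop :=
  ∀ v, F.graph.Reachable F.root v ∧ F.graph.dist F.root v ≤ r

def SimpleGraph.maxDegLE {V : Type} (G : SimpleGraph V) (Δ : ℕ) : Prop :=
  ∀ v, (G.neighborSet v).ncard ≤ Δ

def ballSet {V : Type} (G : SimpleGraph V) (r : ℕ) (v : V) : Set V :=
  {u | G.Reachable v u ∧ G.dist v u ≤ r}

lemma mem_ballSet_self {V : Type} (G : SimpleGraph V) (r : ℕ) (v : V) :
    v ∈ ballSet G r v := ⟨SimpleGraph.Reachable.refl v, by rw [SimpleGraph.dist_self]; exact Nat.zero_le r⟩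

def BallIsoAt {V : Type} (G : SimpleGraph V) (r : ℕ) (v : V) (F : RootedGraph) : Prop :=
  ∃ e : (G.induce (ballSet G r v)) ≃g F.graph,
    e ⟨v, mem_ballSet_self G r v⟩ = F.root

noncomputable def uStat {V : Type} (G : SimpleGraph V) (r : ℕ) (F : RootedGraph) : ℝ :=
  (Nat.card {v : V // BallIsoAt G r v F}) / (Nat.card V)

open SimpleGraph

section Aux

variable {V W : Type}

lemma iso_dist_eq {G : SimpleGraph V} {H : SimpleGraph W} (e : G ≃g H) (u v : V) :
    H.dist (e u) (e v) = G.dist u v := by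
  by_cases h : G.Reachable u v
  · apply le_antisymm
    · obtain ⟨p, hp⟩ := h.exists_walk_length_eq_dist
      calc H.dist (e u) (e v) ≤ (p.map e.toHom).length := SimpleGraph.dist_le _
        _ = G.dist u v := by rw [SimpleGraph.Walk.length_map, hp]
    · have h' : H.Reachable (e u) (e v) := SimpleGraph.Iso.reachable_iff.mpr h
      obtain ⟨q, hq⟩ := h'.exists_walk_length_eq_dist
      calc G.dist u v ≤ ((q.map e.symm.toHom).copy (by simp) (by simp)).length :=
            SimpleGraph.dist_le _
        _ = H.dist (e u) (e v) := by
            rw [SimpleGraph.Walk.length_copy, SimpleGraph.Walk.length_map, hq]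
  · rw [SimpleGraph.dist_eq_zero_of_not_reachable h,
      SimpleGraph.dist_eq_zero_of_not_reachable (fun h' => h (SimpleGraph.Iso.reachable_iff.mp h'))]

lemma mem_ballSet_iso {G : SimpleGraph V} {H : SimpleGraph W} (e : G ≃g H) (v u : V) (r : ℕ) :
    e u ∈ ballSet H r (e v) ↔ u ∈ ballSet G r v := by
  constructor
  · rintro ⟨h1, h2⟩
    exact ⟨SimpleGraph.Iso.reachable_iff.mp h1, by rwa [iso_dist_eq e v u] at h2⟩
  · rintro ⟨h1, h2⟩
    exact ⟨SimpleGraph.Iso.reachable_iff.mpr h1, by rwa [iso_dist_eq e v u]⟩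

noncomputable def ballIso {G : SimpleGraph V} {H : SimpleGraph W} (e : G ≃g H) (r : ℕ) (v : V) :
    (G.induce (ballSet G r v)) ≃g (H.induce (ballSet H r (e v))) where
  toEquiv := e.toEquiv.subtypeEquiv (fun u => (mem_ballSet_iso e v u r).symm)
  map_rel_iff' := by
    intro a b
    simpa using e.map_adj_iff

end Aux
section Aux2

variable {V W : Type}

lemma ballIsoAt_iso {G : SimpleGraph V} {H : SimpleGraph W} (e : G ≃g H) (r : ℕ) (v : V)
    (F : RootedGraph) : BallIsoAt G r v F ↔ BallIsoAt H r (e v) F := by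
  have hb : ballIso e r v ⟨v, mem_ballSet_self G r v⟩ = ⟨e v, mem_ballSet_self H r (e v)⟩ := rfl
  constructor
  · rintro ⟨f, hf⟩
    refine ⟨(ballIso e r v).symm.trans f, ?_⟩
    have : (ballIso e r v).symm ⟨e v, mem_ballSet_self H r (e v)⟩ = ⟨v, mem_ballSet_self G r v⟩ := by
      rw [← hb]; exact (ballIso e r v).symm_apply_apply _
    simpa [this] using hf
  · rintro ⟨f, hf⟩
    refine ⟨(ballIso e r v).trans f, ?_⟩
    simpa [hb] using hf

lemma uStat_iso {G : SimpleGraph V} {H : SimpleGraph W} (e : G ≃g H) (r : ℕ) (F : RootedGraph) :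
    uStat G r F = uStat H r F := by
  unfold uStat
  rw [Nat.card_congr (Equiv.subtypeEquiv (q := fun w => BallIsoAt H r w F) e.toEquiv
    (fun v => ballIsoAt_iso e r v F)),
    Nat.card_congr e.toEquiv]

lemma maxDegLE_iso {Δ : ℕ} {G : SimpleGraph V} {H : SimpleGraph W} (e : G ≃g H)
    (h : G.maxDegLE Δ) : H.maxDegLE Δ := by
  intro w
  have h1 := Nat.card_congr (e.mapNeighborSet (e.symm w))
  rw [Nat.card_coe_set_eq, Nat.card_coe_set_eq] at h1
  have h2 : e (e.symm w) = w := e.apply_symm_apply w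
  rw [h2] at h1
  rw [← h1]
  exact h _

lemma ncard_neighborSet_induce_le [Finite V] (G : SimpleGraph V) (s : Set V) (a : s) :
    ((G.induce s).neighborSet a).ncard ≤ (G.neighborSet (a : V)).ncard := by
  rw [← Nat.card_coe_set_eq, ← Nat.card_coe_set_eq]
  refine Nat.card_le_card_of_injective
    (fun u => ⟨(u : s), u.2⟩ : ((G.induce s).neighborSet a) → (G.neighborSet (a : V))) ?_
  intro u1 u2 h
  apply Subtype.ext
  apply Subtype.ext
  simpa using congrArg Subtype.val h

lemma maxDegLE_of_ballIsoAt {Δ r : ℕ} [Finite V] {G : SimpleGraph V} (hG : G.maxDegLE Δ)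
    {v : V} {F : RootedGraph} (h : BallIsoAt G r v F) : F.MaxDegLE Δ := by
  obtain ⟨f, -⟩ := h
  have hind : (G.induce (ballSet G r v)).maxDegLE Δ :=
    fun a => (ncard_neighborSet_induce_le G _ a).trans (hG _)
  exact maxDegLE_iso f hind

lemma uStat_eq_zero_of_bad {Δ r : ℕ} [Finite V] {G : SimpleGraph V} (hG : G.maxDegLE Δ)
    {F : RootedGraph} (hF : ¬ F.MaxDegLE Δ) : uStat G r F = 0 := by
  have : IsEmpty {v : V // BallIsoAt G r v F} :=
    ⟨fun ⟨v, hv⟩ => hF (maxDegLE_of_ballIsoAt hG hv)⟩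
  simp [uStat, Nat.card_of_isEmpty]

end Aux2
section Aux3

variable {V W : Type}

lemma ball_succ_step {G : SimpleGraph V} {x u : V} {k : ℕ} (hu : u ∈ ballSet G (k + 1) x) :
    u ∈ ballSet G k x ∨ ∃ v ∈ ballSet G k x, G.Adj v u := by
  obtain ⟨hr, hd⟩ := hu
  by_cases hk : G.dist x u ≤ k
  · exact Or.inl ⟨hr, hk⟩
  · right
    have hpos : 0 < G.dist x u := lt_of_le_of_lt (Nat.zero_le k) (Nat.lt_of_not_le hk)
    have hne : u ≠ x := by
      rintro rfl
      rw [SimpleGraph.dist_self] at hpos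
      exact Nat.lt_irrefl 0 hpos
    obtain ⟨p, hp⟩ := hr.exists_walk_length_eq_dist
    obtain ⟨w, ha, q, hq⟩ := (p.reverse).exists_eq_cons_of_ne hne
    refine ⟨w, ⟨(q.reverse).reachable, ?_⟩, ha.symm⟩
    have hlen : q.length + 1 = G.dist x u := by
      have := congrArg SimpleGraph.Walk.length hq
      rw [SimpleGraph.Walk.length_reverse, SimpleGraph.Walk.length_cons] at this
      omega
    calc G.dist x w ≤ (q.reverse).length := SimpleGraph.dist_le _
      _ = q.length := SimpleGraph.Walk.length_reverse q
      _ ≤ k := by omega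

lemma ballSet_ncard_le {Δ : ℕ} [Fintype V] (G : SimpleGraph V) (hG : G.maxDegLE Δ) (x : V)
    (k : ℕ) : (ballSet G k x).ncard ≤ (Δ + 1) ^ k := by
  classical
  induction k with
  | zero =>
    have hsub : ballSet G 0 x ⊆ {x} := by
      rintro u ⟨hr, hd⟩
      have h0 : G.dist x u = 0 := Nat.le_zero.mp hd
      have := (hr.dist_eq_zero_iff).mp h0
      simp [this]
    calc (ballSet G 0 x).ncard ≤ ({x} : Set V).ncard :=
          Set.ncard_le_ncard hsub (Set.finite_singleton x)
      _ = 1 := Set.ncard_singleton x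
      _ ≤ (Δ + 1) ^ 0 := by simp
  | succ k ih =>
    set A : Finset V := (Set.toFinite (ballSet G k x)).toFinset with hA
    have hsub : ballSet G (k + 1) x ⊆
        ↑(A.biUnion (fun v => insert v (G.neighborFinset v))) := by
      intro u hu
      rcases ball_succ_step hu with h | ⟨v, hv, hadj⟩
      · simp only [Finset.coe_biUnion, Set.mem_iUnion]
        exact ⟨u, by simpa [hA] using h, by simp⟩
      · simp only [Finset.coe_biUnion, Set.mem_iUnion]
        exact ⟨v, by simpa [hA] using hv, by simp [hadj]⟩
    have hcard : ∀ v ∈ A, (insert v (G.neighborFinset v)).card ≤ Δ + 1 := by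
      intro v _
      calc (insert v (G.neighborFinset v)).card ≤ (G.neighborFinset v).card + 1 :=
            Finset.card_insert_le _ _
        _ ≤ Δ + 1 := by
            have : (G.neighborFinset v).card = (G.neighborSet v).ncard := by
              rw [SimpleGraph.neighborFinset_def, Set.ncard_eq_toFinset_card']
            have h2 := hG v
            omega
    calc (ballSet G (k + 1) x).ncard
        ≤ (↑(A.biUnion (fun v => insert v (G.neighborFinset v))) : Set V).ncard :=
          Set.ncard_le_ncard hsub (Set.toFinite _)
      _ = (A.biUnion (fun v => insert v (G.neighborFinset v))).card := Set.ncard_coe_finset _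
      _ ≤ A.card * (Δ + 1) := Finset.card_biUnion_le_card_mul _ _ _ hcard
      _ = (ballSet G k x).ncard * (Δ + 1) := by
          rw [hA, Set.ncard_eq_toFinset_card', Set.toFinite_toFinset, Set.toFinset_card]
      _ ≤ (Δ + 1) ^ k * (Δ + 1) := Nat.mul_le_mul_right _ ih
      _ = (Δ + 1) ^ (k + 1) := (pow_succ (Δ + 1) k).symm

lemma rootedGraph_card_le {Δ r : ℕ} (F : RootedGraph) (hF : F.RadiusLE r)
    (hd : F.MaxDegLE Δ) : F.n ≤ (Δ + 1) ^ r := by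
  have hsub : (Set.univ : Set (Fin F.n)) ⊆ ballSet F.graph r F.root :=
    fun v _ => ⟨(hF v).1, (hF v).2⟩
  calc F.n = (Set.univ : Set (Fin F.n)).ncard := by
        rw [Set.ncard_univ, Nat.card_eq_fintype_card, Fintype.card_fin]
    _ ≤ (ballSet F.graph r F.root).ncard := Set.ncard_le_ncard hsub (Set.toFinite _)
    _ ≤ (Δ + 1) ^ r := ballSet_ncard_le F.graph hd F.root r

end Aux3
section Aux4

variable {V W : Type}

/-- Transport a graph along an equivalence of vertex types. -/
def transportGraph (e : V ≃ W) (G : SimpleGraph V) : SimpleGraph W where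
  Adj a b := G.Adj (e.symm a) (e.symm b)
  symm := ⟨fun a b h => G.adj_symm h⟩
  loopless := ⟨fun a h => G.irrefl h⟩

def transportIso (e : V ≃ W) (G : SimpleGraph V) : G ≃g transportGraph e G :=
  ⟨e, by intro a b; simp [transportGraph]⟩

lemma uStat_nonneg (G : SimpleGraph V) (r : ℕ) (F : RootedGraph) : 0 ≤ uStat G r F :=
  div_nonneg (Nat.cast_nonneg _) (Nat.cast_nonneg _)

lemma uStat_le_one [Finite V] [Nonempty V] (G : SimpleGraph V) (r : ℕ) (F : RootedGraph) :
    uStat G r F ≤ 1 := by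
  have hpos : 0 < (Nat.card V : ℝ) := by
    have := Nat.card_pos (α := V)
    exact_mod_cast this
  rw [uStat, div_le_one hpos]
  exact_mod_cast Nat.card_le_card_of_injective (Subtype.val : {v : V // BallIsoAt G r v F} → V)
    Subtype.val_injective

end Aux4

theorem sparse_regularity_exists_bound (Δ : ℕ) (hΔ : 1 ≤ Δ) (ε : ℝ) (hε : 0 < ε) (r : ℕ) :
    ∃ N : ℕ, ∀ (V : Type) [Fintype V] [Nonempty V] (G : SimpleGraph V),
      G.maxDegLE Δ →
      ∃ (n : ℕ) (G' : SimpleGraph (Fin n)), n ≠ 0 ∧ n ≤ N ∧ G'.maxDegLE Δ ∧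
        ∀ F : RootedGraph, F.RadiusLE r → |uStat G r F - uStat G' r F| < ε := by
  classical
  set M : ℕ := (Δ + 1) ^ r with hM
  -- the finite index type of potentially relevant rooted graphs
  let I : Type := Σ n : Fin (M + 1), SimpleGraph (Fin n.1) × Fin n.1
  haveI : Fintype I := by infer_instance
  -- the statistics map
  let θ : ∀ {V : Type}, SimpleGraph V → (I → ℝ) :=
    fun {V} G i => uStat G r ⟨i.1.1, i.2.1, i.2.2⟩
  let S : Set (I → ℝ) :=
    {f | ∃ n, n ≠ 0 ∧ ∃ G' : SimpleGraph (Fin n), G'.maxDegLE Δ ∧ f = θ G'}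
  -- S is totally bounded
  have hSsub : S ⊆ Set.pi Set.univ (fun _ : I => Set.Icc (0 : ℝ) 1) := by
    rintro f ⟨n, hn, G', hG', rfl⟩
    intro i _
    haveI : Nonempty (Fin n) := ⟨⟨0, Nat.pos_of_ne_zero hn⟩⟩
    exact ⟨uStat_nonneg _ _ _, uStat_le_one _ _ _⟩
  have hTB : TotallyBounded S :=
    TotallyBounded.subset hSsub
      ((isCompact_univ_pi (fun _ : I => isCompact_Icc)).totallyBounded)
  obtain ⟨t, htS, htfin, hcover⟩ := totallyBounded_iff_subset.mp hTB
    {p : (I → ℝ) × (I → ℝ) | dist p.1 p.2 < ε} (Metric.dist_mem_uniformity hε)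
  -- choose a size for each center
  let pick : (I → ℝ) → ℕ := fun f => if h : f ∈ S then h.choose else 0
  refine ⟨htfin.toFinset.sup pick, ?_⟩
  intro V _ _ G hG
  -- transport G to Fin (card V)
  let e0 := Fintype.equivFin V
  let G0 := transportGraph e0 G
  have hG0 : G0.maxDegLE Δ := maxDegLE_iso (transportIso e0 G) hG
  have hθ : θ G = θ G0 := funext fun i => uStat_iso (transportIso e0 G) r _
  have hmem : θ G ∈ S := by
    refine ⟨Fintype.card V, Fintype.card_ne_zero, G0, hG0, hθ⟩
  obtain ⟨y, hy, hdist⟩ := Set.mem_iUnion₂.mp (hcover hmem)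
  have hyS : y ∈ S := htS hy
  have hpick : pick y = hyS.choose := dif_pos hyS
  obtain ⟨hn1, G1, hG1, hy1⟩ := hyS.choose_spec
  refine ⟨hyS.choose, G1, hn1, hpick ▸ Finset.le_sup (htfin.mem_toFinset.mpr hy), hG1, ?_⟩
  intro F hFr
  have hdist' : dist (θ G) y < ε := hdist
  by_cases hFd : F.MaxDegLE Δ
  · have hFn : F.n ≤ M := rootedGraph_card_le F hFr hFd
    let i : I := ⟨⟨F.n, Nat.lt_succ_of_le hFn⟩, (F.graph, F.root)⟩
    have h1 : uStat G r F = θ G i := rfl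
    have h2 : uStat G1 r F = y i := (congrFun hy1 i).symm
    rw [h1, h2, ← Real.dist_eq]
    exact lt_of_le_of_lt (dist_le_pi_dist (θ G) y i) hdist'
  · rw [uStat_eq_zero_of_bad hG hFd, uStat_eq_zero_of_bad hG1 hFd]
    simpa using hε
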